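/- Let B = A(I + A)^{−1} where A is the N×N nilpotent matrix with superdiagonal entries ν_i. Then for every real x, e^{−Bx²} J e^{Bx²} = J + x²(B − B²), where J is the diagonal matrix with entries N−i. -/

import Mathlib

open Matrix

theorem conjugation_exp_B (N : ℕ) (ν : Fin N → ℝ)
    (A : Matrix (Fin N) (Fin N) ℝ)
    (hA : A = Matrix.of fun (i j : Fin N) => if (j : ℕ) = (i : ℕ) + 1 then ν i else 0)
    (J : Matrix (Fin N) (Fin N) ℝ)
    (hJ : J = Matrix.diagonal fun (i : Fin N) => (N : ℝ) - 1 - (i : ℕ))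
    (B : Matrix (Fin N) (Fin N) ℝ)
    (hB : B = A * (1 + A)⁻¹)
    (x : ℝ) :
    NormedSpace.exp (-(x ^ 2 • B)) * J * NormedSpace.exp (x ^ 2 • B)
      = J + x ^ 2 • (B - B ^ 2) := by
  -- A is nilpotent
  have hApow : ∀ k : ℕ, ∀ i j : Fin N, (j : ℕ) < (i : ℕ) + k → (A ^ k) i j = 0 := by
    intro k
    induction k with
    | zero =>
      intro i j hij
      rw [pow_zero, Matrix.one_apply_ne]
      intro h; rw [h] at hij; omega
    | succ k ih =>
      intro i j hij
      rw [pow_succ, Matrix.mul_apply]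
      apply Finset.sum_eq_zero
      intro l _
      rcases eq_or_ne ((j : ℕ)) ((l : ℕ) + 1) with h | h
      · have hl : (l : ℕ) < (i : ℕ) + k := by omega
        rw [ih i l hl, zero_mul]
      · have : A l j = 0 := by rw [hA]; simp [h]
        rw [this, mul_zero]
  have hAN : A ^ N = 0 := by
    ext i j
    have : (j : ℕ) < (i : ℕ) + N := lt_of_lt_of_le j.isLt (Nat.le_add_left N i)
    simpa using hApow N i j this
  have hAnil : IsNilpotent A := ⟨N, hAN⟩
  have hdet : IsUnit (1 + A).det :=
    (Matrix.isUnit_iff_isUnit_det _).mp hAnil.isUnit_one_add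
  have hinv1 : (1 + A) * (1 + A)⁻¹ = 1 := Matrix.mul_nonsing_inv _ hdet
  have hinv2 : (1 + A)⁻¹ * (1 + A) = 1 := Matrix.nonsing_inv_mul _ hdet
  have hC : (1 : Matrix (Fin N) (Fin N) ℝ) - B = (1 + A)⁻¹ := by
    rw [hB]
    calc (1 : Matrix (Fin N) (Fin N) ℝ) - A * (1 + A)⁻¹
        = (1 + A) * (1 + A)⁻¹ - A * (1 + A)⁻¹ := by rw [hinv1]
      _ = (1 + A)⁻¹ := by rw [add_mul, one_mul, add_sub_cancel_right]
  have h1 : ((1 : Matrix (Fin N) (Fin N) ℝ) - B) * (1 + A) = 1 := by rw [hC]; exact hinv2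
  have h2 : (1 + A) * ((1 : Matrix (Fin N) (Fin N) ℝ) - B) = 1 := by rw [hC]; exact hinv1
  have hA1 : (1 + A) * B = A := by
    calc (1 + A) * B = (1 + A) - (1 + A) * (1 - B) := by noncomm_ring
    _ = (1 + A) - 1 := by rw [h2]
    _ = A := by noncomm_ring
  have hA2 : B * (1 + A) = A := by
    calc B * (1 + A) = (1 + A) - (1 - B) * (1 + A) := by noncomm_ring
    _ = (1 + A) - 1 := by rw [h1]
    _ = A := by noncomm_ring
  have hABs : A * B = A - B := by
    calc A * B = (1 + A) * B - B := by noncomm_ring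
    _ = A - B := by rw [hA1]
  have hBAs : B * A = A - B := by
    calc B * A = B * (1 + A) - B := by noncomm_ring
    _ = A - B := by rw [hA2]
  have hABc : A * B = B * A := by rw [hABs, hBAs]
  -- B is nilpotent
  have hBeq : B = A * (1 - B) := by rw [hC]; exact hB
  have hcomm : Commute A (1 - B) := by
    show A * (1 - B) = (1 - B) * A
    rw [mul_sub, sub_mul, mul_one, one_mul, hABc]
  have hBN : B ^ N = 0 := by
    conv_lhs => rw [hBeq]
    rw [hcomm.mul_pow, hAN, zero_mul]
  -- commutation relation of J with A
  have hJA : J * A = A * J + A := by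
    rw [hJ, hA]
    ext i j
    simp only [Matrix.diagonal_mul, Matrix.mul_diagonal, Matrix.add_apply, Matrix.of_apply]
    split_ifs with h
    · have hj : ((j : ℕ) : ℝ) = (i : ℕ) + 1 := by rw [h]; push_cast; ring
      rw [hj]; ring
    · ring
  have hJA' : J * (1 + A) = (1 + A) * J + A := by
    rw [mul_add, add_mul, mul_one, one_mul, hJA]; abel
  -- commutation relation of J with B
  have hCA : (1 - B) * A = B := by
    rw [sub_mul, one_mul, hBAs]; abel
  have hCJ : (1 - B) * J = J * (1 - B) + (B - B ^ 2) := by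
    calc (1 - B) * J = (1 - B) * J * ((1 + A) * (1 - B)) := by rw [h2, mul_one]
    _ = (1 - B) * (J * (1 + A)) * (1 - B) := by noncomm_ring
    _ = (1 - B) * ((1 + A) * J + A) * (1 - B) := by rw [hJA']
    _ = ((1 - B) * (1 + A)) * J * (1 - B) + ((1 - B) * A) * (1 - B) := by noncomm_ring
    _ = J * (1 - B) + B * (1 - B) := by rw [h1, hCA, one_mul]
    _ = J * (1 - B) + (B - B ^ 2) := by noncomm_ring
  have hCJ' : J * (1 - B) = (1 - B) * J - (B - B ^ 2) := (sub_eq_of_eq_add hCJ).symm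
  have hJB : J * B = B * J + (B - B ^ 2) := by
    calc J * B = J - J * (1 - B) := by noncomm_ring
    _ = J - ((1 - B) * J - (B - B ^ 2)) := by rw [hCJ']
    _ = J - (1 - B) * J + (B - B ^ 2) := by abel
    _ = B * J + (B - B ^ 2) := by noncomm_ring
  -- iterated commutation
  have hJBn : ∀ n : ℕ, J * B ^ n = B ^ n * J + (n : ℝ) • (B ^ n - B ^ (n + 1)) := by
    intro n
    induction n with
    | zero => simp
    | succ n ih =>
      have step : (B ^ n - B ^ (n + 1)) * B = B ^ (n + 1) - B ^ (n + 2) := by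
        rw [sub_mul, ← pow_succ, ← pow_succ]
      have step2 : B ^ n * (B - B ^ 2) = B ^ (n + 1) - B ^ (n + 2) := by
        rw [mul_sub, ← pow_succ, ← pow_add]
      calc J * B ^ (n + 1) = (J * B ^ n) * B := by rw [pow_succ, mul_assoc]
      _ = (B ^ n * J + (n : ℝ) • (B ^ n - B ^ (n + 1))) * B := by rw [ih]
      _ = B ^ n * (J * B) + (n : ℝ) • ((B ^ n - B ^ (n + 1)) * B) := by
          rw [add_mul, mul_assoc, smul_mul_assoc]
      _ = B ^ n * (B * J + (B - B ^ 2)) + (n : ℝ) • (B ^ (n + 1) - B ^ (n + 2)) := by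
          rw [hJB, step]
      _ = B ^ (n + 1) * J + (B ^ (n + 1) - B ^ (n + 2))
            + (n : ℝ) • (B ^ (n + 1) - B ^ (n + 2)) := by
          rw [mul_add, ← mul_assoc, ← pow_succ, step2]
      _ = B ^ (n + 1) * J + ((n : ℝ) + 1) • (B ^ (n + 1) - B ^ (n + 2)) := by
          rw [add_smul, one_smul]; abel
      _ = B ^ (n + 1) * J + (((n : ℕ) + 1 : ℕ) : ℝ) • (B ^ (n + 1) - B ^ (n + 2)) := by
          push_cast; ring_nf
  set M : Matrix (Fin N) (Fin N) ℝ := x ^ 2 • B with hM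
  have hBn0 : ∀ n : ℕ, N ≤ n → B ^ n = 0 := by
    intro n hn
    rw [← Nat.sub_add_cancel hn, pow_add, hBN, mul_zero]
  have hMn0 : ∀ n : ℕ, N ≤ n → M ^ n = 0 := by
    intro n hn
    rw [hM, smul_pow, hBn0 n hn, smul_zero]
  have hE : NormedSpace.exp M = ∑ n ∈ Finset.range (N + 1), (n.factorial⁻¹ : ℝ) • M ^ n := by
    rw [NormedSpace.exp_eq_tsum (𝕂 := ℝ)]
    refine tsum_eq_sum ?_
    intro n hn
    have hNn : N ≤ n := by simp only [Finset.mem_range] at hn; omega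
    rw [hMn0 n hNn, smul_zero]
  -- termwise identities
  have term1 : ∀ n : ℕ, J * ((n.factorial⁻¹ : ℝ) • M ^ n)
      = ((n.factorial⁻¹ : ℝ) • M ^ n) * J
        + ((n.factorial⁻¹ : ℝ) * (n : ℝ) * (x ^ 2) ^ n) • (B ^ n - B ^ (n + 1)) := by
    intro n
    rw [mul_smul_comm, smul_mul_assoc, hM, smul_pow, mul_smul_comm, smul_mul_assoc,
      hJBn n, smul_smul, smul_add, smul_smul, smul_smul]
    congr 2
    ring
  have term2 : ∀ n : ℕ, ((n.factorial⁻¹ : ℝ) • M ^ n) * (x ^ 2 • (B - B ^ 2))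
      = ((n.factorial⁻¹ : ℝ) * (x ^ 2) ^ (n + 1)) • (B ^ (n + 1) - B ^ (n + 2)) := by
    intro n
    have step2 : B ^ n * (B - B ^ 2) = B ^ (n + 1) - B ^ (n + 2) := by
      rw [mul_sub, ← pow_succ, ← pow_add]
    rw [hM, smul_pow, smul_smul, smul_mul_assoc, mul_smul_comm, smul_smul, step2]
    congr 1
    ring
  -- the sum identity
  have hsum : ∑ n ∈ Finset.range (N + 1),
        ((n.factorial⁻¹ : ℝ) * (n : ℝ) * (x ^ 2) ^ n) • (B ^ n - B ^ (n + 1))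
      = ∑ n ∈ Finset.range (N + 1),
        ((n.factorial⁻¹ : ℝ) * (x ^ 2) ^ (n + 1)) • (B ^ (n + 1) - B ^ (n + 2)) := by
    rw [Finset.sum_range_succ' _ N, Finset.sum_range_succ]
    have h0 : (((0 : ℕ).factorial⁻¹ : ℝ) * ((0 : ℕ) : ℝ) * (x ^ 2) ^ 0)
        • (B ^ 0 - B ^ (0 + 1)) = 0 := by
      simp
    have hN1 : B ^ (N + 1) - B ^ (N + 2) = 0 := by
      rw [hBn0 (N + 1) (by omega), hBn0 (N + 2) (by omega), sub_zero]
    rw [h0, hN1, smul_zero, add_zero, add_zero]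
    refine Finset.sum_congr rfl ?_
    intro m _
    congr 1
    have hfac : ((m + 1).factorial : ℝ) = ((m + 1 : ℕ) : ℝ) * (m.factorial : ℝ) := by
      rw [Nat.factorial_succ]; push_cast; ring
    have hm1 : ((m + 1 : ℕ) : ℝ) ≠ 0 := by positivity
    have hmf : ((m.factorial : ℝ)) ≠ 0 := by positivity
    rw [hfac]
    push_cast
    field_simp
  -- the key identity
  have key : J * NormedSpace.exp M
      = NormedSpace.exp M * (J + x ^ 2 • (B - B ^ 2)) := by
    calc J * NormedSpace.exp M
        = ∑ n ∈ Finset.range (N + 1), J * ((n.factorial⁻¹ : ℝ) • M ^ n) := by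
          rw [hE, Finset.mul_sum]
      _ = ∑ n ∈ Finset.range (N + 1), (((n.factorial⁻¹ : ℝ) • M ^ n) * J
            + ((n.factorial⁻¹ : ℝ) * (n : ℝ) * (x ^ 2) ^ n) • (B ^ n - B ^ (n + 1))) :=
          Finset.sum_congr rfl fun n _ => term1 n
      _ = (∑ n ∈ Finset.range (N + 1), ((n.factorial⁻¹ : ℝ) • M ^ n) * J)
            + ∑ n ∈ Finset.range (N + 1),
              ((n.factorial⁻¹ : ℝ) * (n : ℝ) * (x ^ 2) ^ n) • (B ^ n - B ^ (n + 1)) :=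
          Finset.sum_add_distrib
      _ = (∑ n ∈ Finset.range (N + 1), ((n.factorial⁻¹ : ℝ) • M ^ n) * J)
            + ∑ n ∈ Finset.range (N + 1),
              ((n.factorial⁻¹ : ℝ) * (x ^ 2) ^ (n + 1)) • (B ^ (n + 1) - B ^ (n + 2)) := by
          rw [hsum]
      _ = (∑ n ∈ Finset.range (N + 1), ((n.factorial⁻¹ : ℝ) • M ^ n) * J)
            + ∑ n ∈ Finset.range (N + 1),
              ((n.factorial⁻¹ : ℝ) • M ^ n) * (x ^ 2 • (B - B ^ 2)) := by
          congr 1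
          exact Finset.sum_congr rfl fun n _ => (term2 n).symm
      _ = (∑ n ∈ Finset.range (N + 1), (n.factorial⁻¹ : ℝ) • M ^ n) * J
            + (∑ n ∈ Finset.range (N + 1), (n.factorial⁻¹ : ℝ) • M ^ n)
              * (x ^ 2 • (B - B ^ 2)) := by
          rw [Finset.sum_mul, Finset.sum_mul]
      _ = NormedSpace.exp M * (J + x ^ 2 • (B - B ^ 2)) := by
          rw [← hE, mul_add]
  have hinvexp : NormedSpace.exp (-M) * NormedSpace.exp M = 1 := by
    rw [← Matrix.exp_add_of_commute (-M) M ((Commute.refl M).neg_left),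
      neg_add_cancel, NormedSpace.exp_zero]
  calc NormedSpace.exp (-M) * J * NormedSpace.exp M
      = NormedSpace.exp (-M) * (J * NormedSpace.exp M) := by rw [mul_assoc]
    _ = NormedSpace.exp (-M) * (NormedSpace.exp M * (J + x ^ 2 • (B - B ^ 2))) := by
        rw [key]
    _ = (NormedSpace.exp (-M) * NormedSpace.exp M) * (J + x ^ 2 • (B - B ^ 2)) := by
        rw [mul_assoc]
    _ = J + x ^ 2 • (B - B ^ 2) := by rw [hinvexp, one_mul]
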